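/- Let R be a commutative ring and G a group. Let class_R(G) denote the R-module of finitely supported functions from the set con(G) of conjugacy classes of G to R, and define the universal trace tr^u : M_n(R[G]) → class_R(G) by sending a matrix to the function whose value at a conjugacy class c is the sum, over g ∈ c and over the diagonal entries, of the coefficients of g in those diagonal entries. If A ∈ M_n(R[G]) and B ∈ M_m(R[G]) are matrices with A² = A and B² = B such that the image of right multiplication by A on R[G]ⁿ and the image of right multiplication by B on R[G]^m are isomorphic as left R[G]-modules, then tr^u(A) = tr^u(B). -/

import Mathlib

open scoped Matrix

noncomputable def classMap (R : Type*) [CommRing R] (G : Type*) [Group G] :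
    MonoidAlgebra R G →ₗ[R] (ConjClasses G →₀ R) :=
  Finsupp.lmapDomain R R ConjClasses.mk ∘ₗ (MonoidAlgebra.coeffLinearEquiv R).toLinearMap

lemma classMap_mul_comm {R : Type*} [CommRing R] {G : Type*} [Group G]
    (a b : MonoidAlgebra R G) :
    classMap R G (a * b) = classMap R G (b * a) := by
  induction a using MonoidAlgebra.induction_linear with
  | zero => simp
  | add x y hx hy => simp [add_mul, mul_add, map_add, hx, hy]
  | single g r =>
    induction b using MonoidAlgebra.induction_linear with
    | zero => simp
    | add x y hx hy => simp [add_mul, mul_add, map_add, hx, hy]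
    | single h s =>
      show classMap R G (MonoidAlgebra.single g r * MonoidAlgebra.single h s) = _
      rw [MonoidAlgebra.single_mul_single, MonoidAlgebra.single_mul_single]
      show Finsupp.lmapDomain R R ConjClasses.mk (MonoidAlgebra.single (g * h) (r * s)).coeff = Finsupp.lmapDomain R R ConjClasses.mk (MonoidAlgebra.single (h * g) (s * r)).coeff
      simp only [Finsupp.lmapDomain_apply, MonoidAlgebra.coeffLinearEquiv_apply, MonoidAlgebra.coeff_single, Finsupp.mapDomain_single]
      have : ConjClasses.mk (g * h) = ConjClasses.mk (h * g) := by
        rw [ConjClasses.mk_eq_mk_iff_isConj]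
        exact ⟨⟨h, h⁻¹, mul_inv_cancel h, inv_mul_cancel h⟩, by
          simp [SemiconjBy, mul_assoc]⟩
      rw [this, mul_comm r s]



/-- The universal trace `tr^u : Mₙ(R[G]) → class_R(G)`: it sends a square matrix over the
group ring to the finitely supported function on the set of conjugacy classes of `G` whose
value at a class `c` is the sum, over `g ∈ c` and over the diagonal entries, of the
coefficients of `g`.  Concretely, it is obtained from the `Finsupp`-valued trace
`Σᵢ Aᵢᵢ : G →₀ R` by pushing forward along `G → ConjClasses G`. -/
noncomputable def univTrace {R : Type*} [CommRing R] {G : Type*} [Group G] {n : ℕ}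
    (A : Matrix (Fin n) (Fin n) (MonoidAlgebra R G)) : ConjClasses G →₀ R :=
  Finsupp.mapDomain ConjClasses.mk (Matrix.trace A).coeff

lemma univTrace_eq_classMap {R : Type*} [CommRing R] {G : Type*} [Group G] {n : ℕ}
    (A : Matrix (Fin n) (Fin n) (MonoidAlgebra R G)) :
    univTrace A = classMap R G (Matrix.trace A) := rfl

lemma univTrace_mul_comm {R : Type*} [CommRing R] {G : Type*} [Group G] {n m : ℕ}
    (M : Matrix (Fin n) (Fin m) (MonoidAlgebra R G))
    (N : Matrix (Fin m) (Fin n) (MonoidAlgebra R G)) :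
    univTrace (M * N) = univTrace (N * M) := by
  rw [univTrace_eq_classMap, univTrace_eq_classMap]
  have h1 : classMap R G (Matrix.trace (M * N)) =
      ∑ i, ∑ j, classMap R G (M i j * N j i) := by
    simp [Matrix.trace, Matrix.diag, Matrix.mul_apply, map_sum]
  have h2 : classMap R G (Matrix.trace (N * M)) =
      ∑ j, ∑ i, classMap R G (N j i * M i j) := by
    simp [Matrix.trace, Matrix.diag, Matrix.mul_apply, map_sum]
  rw [h1, h2, Finset.sum_comm]
  exact Finset.sum_congr rfl fun i _ => Finset.sum_congr rfl fun j _ =>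
    classMap_mul_comm _ _

/-- Let `R` be a commutative ring and `G` a group.  If `A ∈ Mₙ(R[G])` and `B ∈ Mₘ(R[G])` are
idempotent matrices such that the images of right multiplication by `A` on `R[G]ⁿ` and by `B`
on `R[G]^m` are isomorphic as left `R[G]`-modules, then `tr^u(A) = tr^u(B)`.  (This is the
well-definedness of the Hattori–Stallings rank of a finitely generated projective
`R[G]`-module.) -/
theorem stmt_14 {R : Type*} [CommRing R] {G : Type*} [Group G] {n m : ℕ}
    (A : Matrix (Fin n) (Fin n) (MonoidAlgebra R G))
    (B : Matrix (Fin m) (Fin m) (MonoidAlgebra R G))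
    (hA : A * A = A) (hB : B * B = B)
    (hiso : Nonempty ((LinearMap.range A.vecMulLinear) ≃ₗ[MonoidAlgebra R G]
      (LinearMap.range B.vecMulLinear))) :
    univTrace A = univTrace B := by
  obtain ⟨e⟩ := hiso
  -- fixed-point lemmas
  have hfixA : ∀ v ∈ LinearMap.range A.vecMulLinear, v ᵥ* A = v := by
    rintro _ ⟨u, rfl⟩
    simp only [Matrix.vecMulLinear_apply, Matrix.vecMul_vecMul, hA]
  have hfixB : ∀ v ∈ LinearMap.range B.vecMulLinear, v ᵥ* B = v := by
    rintro _ ⟨u, rfl⟩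
    simp only [Matrix.vecMulLinear_apply, Matrix.vecMul_vecMul, hB]
  let f : (Fin n → MonoidAlgebra R G) →ₗ[MonoidAlgebra R G] (Fin m → MonoidAlgebra R G) :=
    (LinearMap.range B.vecMulLinear).subtype ∘ₗ e.toLinearMap ∘ₗ
      A.vecMulLinear.rangeRestrict
  let g : (Fin m → MonoidAlgebra R G) →ₗ[MonoidAlgebra R G] (Fin n → MonoidAlgebra R G) :=
    (LinearMap.range A.vecMulLinear).subtype ∘ₗ e.symm.toLinearMap ∘ₗ
      B.vecMulLinear.rangeRestrict
  have hfmem : ∀ v, f v ∈ LinearMap.range B.vecMulLinear := fun v =>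
    (e (A.vecMulLinear.rangeRestrict v)).2
  have hgmem : ∀ w, g w ∈ LinearMap.range A.vecMulLinear := fun w =>
    (e.symm (B.vecMulLinear.rangeRestrict w)).2
  have hgf : ∀ v, g (f v) = v ᵥ* A := by
    intro v
    have key : B.vecMulLinear.rangeRestrict (f v) = e (A.vecMulLinear.rangeRestrict v) := by
      apply Subtype.ext
      show (f v) ᵥ* B = _
      rw [hfixB _ (hfmem v)]
      rfl
    show ((e.symm (B.vecMulLinear.rangeRestrict (f v))) : Fin n → MonoidAlgebra R G) = v ᵥ* A
    rw [key, e.symm_apply_apply]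
    rfl
  have hfg : ∀ w, f (g w) = w ᵥ* B := by
    intro w
    have key : A.vecMulLinear.rangeRestrict (g w) = e.symm (B.vecMulLinear.rangeRestrict w) := by
      apply Subtype.ext
      show (g w) ᵥ* A = _
      rw [hfixA _ (hgmem w)]
      rfl
    show ((e (A.vecMulLinear.rangeRestrict (g w))) : Fin m → MonoidAlgebra R G) = w ᵥ* B
    rw [key, e.apply_symm_apply]
    rfl
  -- turn f, g into matrices
  let X : Matrix (Fin n) (Fin m) (MonoidAlgebra R G) := LinearMap.toMatrixRight' f
  let Y : Matrix (Fin m) (Fin n) (MonoidAlgebra R G) := LinearMap.toMatrixRight' g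
  have hX : X.vecMulLinear = f := LinearMap.toMatrixRight'.symm_apply_apply f
  have hY : Y.vecMulLinear = g := LinearMap.toMatrixRight'.symm_apply_apply g
  have hXv : ∀ v, v ᵥ* X = f v := fun v => congrArg (fun φ => φ v) hX
  have hYv : ∀ w, w ᵥ* Y = g w := fun w => congrArg (fun φ => φ w) hY
  have hXY : X * Y = A := by
    have hinj : Function.Injective
        (Matrix.vecMulLinear : Matrix (Fin n) (Fin n) (MonoidAlgebra R G) → (Fin n → MonoidAlgebra R G) →ₗ[MonoidAlgebra R G] (Fin n → MonoidAlgebra R G)) :=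
      LinearMap.toMatrixRight'.symm.injective
    apply hinj
    apply LinearMap.ext; intro v
    show v ᵥ* (X * Y) = v ᵥ* A
    rw [← Matrix.vecMul_vecMul, hXv, hYv, hgf]
  have hYX : Y * X = B := by
    have hinj : Function.Injective
        (Matrix.vecMulLinear : Matrix (Fin m) (Fin m) (MonoidAlgebra R G) → (Fin m → MonoidAlgebra R G) →ₗ[MonoidAlgebra R G] (Fin m → MonoidAlgebra R G)) :=
      LinearMap.toMatrixRight'.symm.injective
    apply hinj
    apply LinearMap.ext; intro w
    show w ᵥ* (Y * X) = w ᵥ* B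
    rw [← Matrix.vecMul_vecMul, hYv, hXv, hfg]
  calc univTrace A = univTrace (X * Y) := by rw [hXY]
    _ = univTrace (Y * X) := univTrace_mul_comm X Y
    _ = univTrace B := by rw [hYX]
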